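/- arXiv:1702.08545 — 10 statements merged into one kernel-verified Lean document; each statement's English description precedes it below -/
import Mathlib

section
/- For all finite sets S₁, S₂ of points in ℝ², the maxima set of S₁ ∪ S₂ equals the maxima set of Max(S₁) ∪ Max(S₂). (Hence computing the maxima set of a union reduces to merging the maxima sets of the parts.) -/
/-- `p` dominates `q` if `q.1 ≤ p.1` and `q.2 ≤ p.2`. -/
def Dominates (p q : ℝ × ℝ) : Prop := q.1 ≤ p.1 ∧ q.2 ≤ p.2

/-- The maxima set of a set `S` of planar points: the points of `S`
dominated by no other point of `S`. -/
def MaxSet (S : Set (ℝ × ℝ)) : Set (ℝ × ℝ) :=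
  {p | p ∈ S ∧ ∀ q ∈ S, q ≠ p → ¬ Dominates q p}

lemma dominates_iff (p q : ℝ × ℝ) : Dominates p q ↔ q ≤ p := by
  simp [Dominates, Prod.le_def]

lemma exists_max_dom (S : Finset (ℝ × ℝ)) {q : ℝ × ℝ} (hq : q ∈ S) :
    ∃ m ∈ MaxSet ↑S, Dominates m q := by
  obtain ⟨m, hle, hmax⟩ := Finset.exists_le_maximal S hq
  refine ⟨m, ⟨hmax.1, fun r hr hne hdom => ?_⟩, (dominates_iff _ _).2 hle⟩
  exact hne (le_antisymm (hmax.2 hr ((dominates_iff _ _).1 hdom)) ((dominates_iff _ _).1 hdom))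

theorem maxSet_union_eq_maxSet_of_maxSets (S₁ S₂ : Finset (ℝ × ℝ)) :
    MaxSet (↑S₁ ∪ ↑S₂) = MaxSet (MaxSet ↑S₁ ∪ MaxSet ↑S₂) := by
  ext p
  constructor
  · rintro ⟨hp, hmax⟩
    constructor
    · rcases hp with h | h
      · left
        exact ⟨h, fun q hq hne hdom => hmax q (Or.inl hq) hne hdom⟩
      · right
        exact ⟨h, fun q hq hne hdom => hmax q (Or.inr hq) hne hdom⟩
    · rintro q (⟨hq, _⟩ | ⟨hq, _⟩) hne hdom
      · exact hmax q (Or.inl hq) hne hdom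
      · exact hmax q (Or.inr hq) hne hdom
  · rintro ⟨hp, hmax⟩
    have hpS : p ∈ (↑S₁ ∪ ↑S₂ : Set (ℝ × ℝ)) := by
      rcases hp with ⟨h, _⟩ | ⟨h, _⟩
      · exact Or.inl h
      · exact Or.inr h
    refine ⟨hpS, fun q hq hne hdom => ?_⟩
    have : ∃ m, m ∈ (MaxSet ↑S₁ ∪ MaxSet ↑S₂ : Set (ℝ × ℝ)) ∧ Dominates m q := by
      rcases hq with h | h
      · obtain ⟨m, hm, hd⟩ := exists_max_dom S₁ h
        exact ⟨m, Or.inl hm, hd⟩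
      · obtain ⟨m, hm, hd⟩ := exists_max_dom S₂ h
        exact ⟨m, Or.inr hm, hd⟩
    obtain ⟨m, hm, hd⟩ := this
    have hdmp : Dominates m p := ⟨hdom.1.trans hd.1, hdom.2.trans hd.2⟩
    by_cases hmp : m = p
    · subst hmp
      exact hne (le_antisymm ((dominates_iff _ _).1 hd) ((dominates_iff _ _).1 hdom))
    · exact hmax m hm hmp hdmp
end

section
/- Soundness of maximality arguments (first variant): Let M be a maxima sequence with indices a ≤ b, and let N₁, …, N_t be maxima sequences with chosen indices a₁, …, a_t, all points of M, N₁, …, N_t being pairwise distinct. Suppose that M(b) dominates N_k(a_k) for every k, and that for every k, either a_k is the first index of N_k or the x-coordinate of N_k(a_k − 1) is strictly less than the x-coordinate of M(a). Then every point M(p) with a ≤ p ≤ b is maximal in the union of the sets of points of M, N₁, …, N_t. -/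
/-- `p` is a maximal point of the set `S`. -/
def MaximalInSet (S : Set (ℝ × ℝ)) (p : ℝ × ℝ) : Prop :=
  p ∈ S ∧ ∀ q ∈ S, q ≠ p → ¬ Dominates q p

/-- A maxima sequence: strictly increasing `x`-coordinates and strictly
decreasing `y`-coordinates. -/
def IsMaximaSeq {n : ℕ} (M : Fin n → ℝ × ℝ) : Prop :=
  (StrictMono fun i => (M i).1) ∧ (StrictAnti fun i => (M i).2)

theorem maximality_argument_sound_first_variant
    {n t : ℕ} (M : Fin n → ℝ × ℝ) (hM : IsMaximaSeq M)
    (a b : Fin n) (hab : a ≤ b)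
    (nk : Fin t → ℕ) (N : ∀ k : Fin t, Fin (nk k) → ℝ × ℝ)
    (hN : ∀ k, IsMaximaSeq (N k))
    (aIdx : ∀ k : Fin t, Fin (nk k))
    -- all points of `M`, `N₁, …, N_t` are pairwise distinct:
    (hdist₁ : ∀ (k : Fin t) (i : Fin n) (j : Fin (nk k)), M i ≠ N k j)
    (hdist₂ : ∀ (k k' : Fin t), k ≠ k' →
      ∀ (i : Fin (nk k)) (j : Fin (nk k')), N k i ≠ N k' j)
    -- `M b` dominates `N k (aIdx k)` for every `k`:
    (hdom : ∀ k, Dominates (M b) (N k (aIdx k)))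
    -- for every `k`, either `aIdx k` is the first index of `N k`, or the
    -- `x`-coordinate of the previous point is strictly less than that of `M a`:
    (hfirst : ∀ k, (aIdx k : ℕ) = 0 ∨
      ∃ _ : 0 < (aIdx k : ℕ),
        (N k ⟨(aIdx k : ℕ) - 1,
          Nat.lt_of_le_of_lt (Nat.sub_le _ _) (aIdx k).isLt⟩).1 < (M a).1) :
    ∀ p : Fin n, a ≤ p → p ≤ b →
      MaximalInSet (Set.range M ∪ ⋃ k, Set.range (N k)) (M p) := by
  intro p hap hpb
  refine ⟨Or.inl ⟨p, rfl⟩, ?_⟩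
  rintro q (⟨i, rfl⟩ | hq) hne hdq
  · rcases lt_trichotomy i p with h | h | h
    · exact absurd hdq.1 (not_le.mpr (hM.1 h))
    · exact hne (congrArg M h)
    · exact absurd hdq.2 (not_le.mpr (hM.2 h))
  · simp only [Set.mem_iUnion, Set.mem_range] at hq
    obtain ⟨k, j, rfl⟩ := hq
    rcases lt_or_ge j (aIdx k) with hj | hj
    · rcases hfirst k with h0 | ⟨hpos, hx⟩
      · have : (j : ℕ) < (aIdx k : ℕ) := hj
        omega
      · have hj' : j ≤ (⟨(aIdx k : ℕ) - 1,
            Nat.lt_of_le_of_lt (Nat.sub_le _ _) (aIdx k).isLt⟩ : Fin (nk k)) := by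
          have : (j : ℕ) < (aIdx k : ℕ) := hj
          simp [Fin.le_def]; omega
        have h1 := (hN k).1.monotone hj'
        have h2 : (M a).1 ≤ (M p).1 := hM.1.monotone hap
        have h3 := hdq.1
        linarith
    · have h2 : (N k j).2 ≤ (N k (aIdx k)).2 := (hN k).2.antitone hj
      have h3 := (hdom k).2
      have h4 : (M b).2 ≤ (M p).2 := hM.2.antitone hpb
      have h5 := hdq.2
      have hpb' : p = b := by
        by_contra h
        have := hM.2 (lt_of_le_of_ne hpb h)
        simp only at this
        linarith
      subst hpb'
      have hja : j = aIdx k := by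
        by_contra h
        have := (hN k).2 (lt_of_le_of_ne hj (Ne.symm h))
        simp only at this
        linarith
      subst hja
      have h6 := (hdom k).1
      have h7 := hdq.1
      exact hdist₁ k p (aIdx k) (Prod.ext (le_antisymm h7 h6) (le_antisymm h5 (le_trans h2 h3)))
end

section
/- Soundness of maximality arguments (second variant): Let M be a maxima sequence with indices a ≤ b, and let N₁, …, N_t be maxima sequences with chosen indices b₁, …, b_t, all points of M, N₁, …, N_t being pairwise distinct. Suppose that M(a) dominates N_k(b_k) for every k, and that for every k, either b_k is the last index of N_k or the y-coordinate of N_k(b_k + 1) is strictly less than the y-coordinate of M(b). Then every point M(p) with a ≤ p ≤ b is maximal in the union of the sets of points of M, N₁, …, N_t. -/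
theorem maximality_argument_sound_second_variant
    {n t : ℕ} (M : Fin n → ℝ × ℝ) (hM : IsMaximaSeq M)
    (a b : Fin n) (hab : a ≤ b)
    (nk : Fin t → ℕ) (N : ∀ k : Fin t, Fin (nk k) → ℝ × ℝ)
    (hN : ∀ k, IsMaximaSeq (N k))
    (bIdx : ∀ k : Fin t, Fin (nk k))
    -- all points of `M`, `N₁, …, N_t` are pairwise distinct:
    (hdist₁ : ∀ (k : Fin t) (i : Fin n) (j : Fin (nk k)), M i ≠ N k j)
    (hdist₂ : ∀ (k k' : Fin t), k ≠ k' →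
      ∀ (i : Fin (nk k)) (j : Fin (nk k')), N k i ≠ N k' j)
    -- `M a` dominates `N k (bIdx k)` for every `k`:
    (hdom : ∀ k, Dominates (M a) (N k (bIdx k)))
    -- for every `k`, either `bIdx k` is the last index of `N k`, or the
    -- `y`-coordinate of the next point is strictly less than that of `M b`:
    (hlast : ∀ k, (bIdx k : ℕ) + 1 = nk k ∨
      ∃ h : (bIdx k : ℕ) + 1 < nk k,
        (N k ⟨(bIdx k : ℕ) + 1, h⟩).2 < (M b).2) :
    ∀ p : Fin n, a ≤ p → p ≤ b →
      MaximalInSet (Set.range M ∪ ⋃ k, Set.range (N k)) (M p) := by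
  intro p hap hpb
  refine ⟨Or.inl ⟨p, rfl⟩, ?_⟩
  rintro q (⟨i, rfl⟩ | hq) hne hdq
  · rcases lt_trichotomy i p with h | h | h
    · exact absurd hdq.1 (not_le.2 (hM.1 h))
    · exact hne (congrArg M h)
    · exact absurd hdq.2 (not_le.2 (hM.2 h))
  · simp only [Set.mem_iUnion, Set.mem_range] at hq
    obtain ⟨k, j, rfl⟩ := hq
    rcases lt_trichotomy j (bIdx k) with h | h | h
    · have h1 : (N k j).1 < (N k (bIdx k)).1 := (hN k).1 h
      have h2 := (hdom k).1
      have h3 : (M a).1 ≤ (M p).1 := hM.1.monotone hap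
      have := hdq.1
      linarith
    · subst h
      have h1 := (hdom k).1
      have h2 : (M a).1 ≤ (M p).1 := hM.1.monotone hap
      have h3 := hdq.1
      have hx : (M a).1 = (M p).1 := le_antisymm h2 (by linarith)
      have hap' : a = p := hM.1.injective hx
      subst hap'
      have hy : (N k (bIdx k)).2 = (M a).2 := le_antisymm (hdom k).2 hdq.2
      have hx2 : (N k (bIdx k)).1 = (M a).1 := le_antisymm h1 h3
      exact hdist₁ k a (bIdx k) (Prod.ext hx2.symm hy.symm)
    · rcases hlast k with heq | ⟨h', hy⟩
      · have := j.isLt; omega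
      · have hle : (⟨(bIdx k : ℕ) + 1, h'⟩ : Fin (nk k)) ≤ j := h
        have h1 : (N k j).2 ≤ (N k ⟨(bIdx k : ℕ) + 1, h'⟩).2 := (hN k).2.antitone hle
        have h2 : (M b).2 ≤ (M p).2 := (hM).2.antitone hpb
        have := hdq.2
        linarith
end

section
/- Let u(0), …, u(n−1) be an upper hull sequence, let μ ∈ ℝ, and let d be an index such that (d = 0 or m(u(d−1), u(d)) ≥ μ) and (d = n−1 or μ ≥ m(u(d), u(d+1))). Then for every index i, u(i).2 − μ·u(i).1 ≤ u(d).2 − μ·u(d).1; that is, u(d) maximizes y − μ·x among all points of the chain, so u(d) is the point of the chain admitting a supporting line of slope μ. -/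
/-- The slope of the line through `p` and `q`. -/
noncomputable def slopeOf (p q : ℝ × ℝ) : ℝ := (q.2 - p.2) / (q.1 - p.1)

/-- An upper hull sequence: strictly increasing `x`-coordinates with strictly
decreasing consecutive slopes. -/
def IsUpperHullSeq {n : ℕ} (u : Fin n → ℝ × ℝ) : Prop :=
  (StrictMono fun i => (u i).1) ∧
  ∀ (i : ℕ) (h : i + 2 < n),
    slopeOf (u ⟨i + 1, by omega⟩) (u ⟨i + 2, h⟩) <
      slopeOf (u ⟨i, by omega⟩) (u ⟨i + 1, by omega⟩)

/-- The slope `μ` is "sandwiched" at index `i` of the chain `u`: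
`(i = 0 or m(u(i−1), u(i)) ≥ μ)` and `(i = n−1 or μ ≥ m(u(i), u(i+1)))`. -/
def Sandwiched {n : ℕ} (u : Fin n → ℝ × ℝ) (i : Fin n) (μ : ℝ) : Prop :=
  ((i : ℕ) = 0 ∨
    ∃ _ : 0 < (i : ℕ),
      μ ≤ slopeOf (u ⟨(i : ℕ) - 1, Nat.lt_of_le_of_lt (Nat.sub_le _ _) i.isLt⟩) (u i)) ∧
  ((i : ℕ) = n - 1 ∨
    ∃ h : (i : ℕ) + 1 < n, slopeOf (u i) (u ⟨(i : ℕ) + 1, h⟩) ≤ μ)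

lemma hull_step_eq {n : ℕ} (u : Fin n → ℝ × ℝ)
    (hmono : StrictMono fun i => (u i).1) (μ : ℝ) (i : ℕ) (h : i + 1 < n) :
    ((u ⟨i + 1, h⟩).2 - μ * (u ⟨i + 1, h⟩).1)
        - ((u ⟨i, by omega⟩).2 - μ * (u ⟨i, by omega⟩).1)
      = (slopeOf (u ⟨i, by omega⟩) (u ⟨i + 1, h⟩) - μ)
        * ((u ⟨i + 1, h⟩).1 - (u ⟨i, by omega⟩).1) := by
  have hx : (u ⟨i, by omega⟩).1 < (u ⟨i + 1, h⟩).1 := hmono (by simp [Fin.lt_def])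
  have hne : (u ⟨i + 1, h⟩).1 - (u ⟨i, by omega⟩).1 ≠ 0 := sub_ne_zero.mpr hx.ne'
  rw [slopeOf, sub_mul, div_mul_cancel₀ _ hne]
  ring

lemma hull_slope_anti {n : ℕ} (u : Fin n → ℝ × ℝ) (hu : IsUpperHullSeq u) :
    ∀ j i, ∀ _ : i ≤ j, ∀ (hj : j + 1 < n),
      slopeOf (u ⟨j, by omega⟩) (u ⟨j + 1, hj⟩)
        ≤ slopeOf (u ⟨i, by omega⟩) (u ⟨i + 1, by omega⟩) := by
  intro j
  induction j with
  | zero => intro i hi hj; interval_cases i; exact le_refl _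
  | succ k ih =>
      intro i hi hj
      rcases Nat.lt_or_ge i (k + 1) with h1 | h1
      · have h2 : i ≤ k := by omega
        calc slopeOf (u ⟨k + 1, by omega⟩) (u ⟨k + 2, by omega⟩)
            ≤ slopeOf (u ⟨k, by omega⟩) (u ⟨k + 1, by omega⟩) := (hu.2 k (by omega)).le
          _ ≤ _ := ih i h2 (by omega)
      · have : i = k + 1 := by omega
        subst this; exact le_refl _

theorem supporting_line_maximizer
    {n : ℕ} (u : Fin n → ℝ × ℝ) (hu : IsUpperHullSeq u)
    (μ : ℝ) (d : Fin n) (hd : Sandwiched u d μ) :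
    ∀ i : Fin n, (u i).2 - μ * (u i).1 ≤ (u d).2 - μ * (u d).1 := by
  intro i
  set f : Fin n → ℝ := fun j => (u j).2 - μ * (u j).1 with hf
  show f i ≤ f d
  rcases lt_trichotomy (i : ℕ) (d : ℕ) with hlt | heq | hgt
  · -- left of d : μ ≤ slope(d-1,d) and slopes to the left are ≥ it
    have hdpos : 0 < (d : ℕ) := by omega
    rcases hd.1 with h0 | ⟨_, hμ⟩
    · omega
    have hμ' : μ ≤ slopeOf (u ⟨(d : ℕ) - 1, by omega⟩) (u ⟨(d : ℕ) - 1 + 1, by omega⟩) := by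
      have : ((⟨(d : ℕ) - 1 + 1, by omega⟩ : Fin n)) = d := by
        ext; simp; omega
      rw [this]; exact hμ
    -- induction: for m ≤ d, f ⟨d - m⟩ ≤ f d
    have key : ∀ m, m ≤ (d : ℕ) → f ⟨(d : ℕ) - m, by omega⟩ ≤ f d := by
      intro m
      induction m with
      | zero =>
          intro _
          have : ((⟨(d : ℕ) - 0, by omega⟩ : Fin n)) = d := by ext; simp
          rw [this]
      | succ m ihm =>
          intro hm
          have h1 : (d : ℕ) - (m + 1) + 1 = (d : ℕ) - m := by omega
          have hstep := hull_step_eq u hu.1 μ ((d : ℕ) - (m + 1)) (by omega)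
          have hsl : μ ≤ slopeOf (u ⟨(d : ℕ) - (m + 1), by omega⟩)
              (u ⟨(d : ℕ) - (m + 1) + 1, by omega⟩) :=
            le_trans hμ' (hull_slope_anti u hu ((d : ℕ) - 1) ((d : ℕ) - (m + 1)) (by omega)
              (by omega))
          have hx : (u ⟨(d : ℕ) - (m + 1), by omega⟩).1
              < (u ⟨(d : ℕ) - (m + 1) + 1, by omega⟩).1 := hu.1 (by simp [Fin.lt_def])
          have hnn : (0 : ℝ) ≤ (slopeOf (u ⟨(d : ℕ) - (m + 1), by omega⟩)
                (u ⟨(d : ℕ) - (m + 1) + 1, by omega⟩) - μ)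
              * ((u ⟨(d : ℕ) - (m + 1) + 1, by omega⟩).1
                - (u ⟨(d : ℕ) - (m + 1), by omega⟩).1) :=
            mul_nonneg (by linarith) (by linarith)
          have hle : f ⟨(d : ℕ) - (m + 1), by omega⟩ ≤ f ⟨(d : ℕ) - (m + 1) + 1, by omega⟩ := by
            simp only [hf]; linarith [hstep, hnn]
          have heqidx : ((⟨(d : ℕ) - (m + 1) + 1, by omega⟩ : Fin n))
              = (⟨(d : ℕ) - m, by omega⟩ : Fin n) := by ext; simp; omega
          rw [heqidx] at hle
          exact le_trans hle (ihm (by omega))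
    have hkey := key ((d : ℕ) - (i : ℕ)) (by omega)
    have : ((⟨(d : ℕ) - ((d : ℕ) - (i : ℕ)), by omega⟩ : Fin n)) = i := by
      ext; simp; omega
    rwa [this] at hkey
  · have : i = d := Fin.ext heq
    rw [this]
  · -- right of d
    have hdn : (d : ℕ) + 1 < n := by omega
    rcases hd.2 with h0 | ⟨h1, hμ⟩
    · omega
    -- induction: for d + m < n, f ⟨d + m⟩ ≤ f d
    have key : ∀ m, ∀ (hm : (d : ℕ) + m < n), f ⟨(d : ℕ) + m, hm⟩ ≤ f d := by
      intro m
      induction m with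
      | zero =>
          intro hm
          have : ((⟨(d : ℕ) + 0, hm⟩ : Fin n)) = d := by ext; simp
          rw [this]
      | succ m ihm =>
          intro hm
          have hstep := hull_step_eq u hu.1 μ ((d : ℕ) + m) (by omega)
          have hsl : slopeOf (u ⟨(d : ℕ) + m, by omega⟩) (u ⟨(d : ℕ) + m + 1, by omega⟩) ≤ μ := by
            have ha := hull_slope_anti u hu ((d : ℕ) + m) (d : ℕ) (by omega) (by omega)
            have hud : ((⟨(d : ℕ), by omega⟩ : Fin n)) = d := by ext; simp
            rw [hud] at ha
            exact le_trans ha hμ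
          have hx : (u ⟨(d : ℕ) + m, by omega⟩).1 < (u ⟨(d : ℕ) + m + 1, by omega⟩).1 :=
            hu.1 (by simp [Fin.lt_def])
          have hnp : (slopeOf (u ⟨(d : ℕ) + m, by omega⟩) (u ⟨(d : ℕ) + m + 1, by omega⟩) - μ)
              * ((u ⟨(d : ℕ) + m + 1, by omega⟩).1 - (u ⟨(d : ℕ) + m, by omega⟩).1) ≤ 0 :=
            mul_nonpos_of_nonpos_of_nonneg (by linarith) (by linarith)
          have hle : f ⟨(d : ℕ) + m + 1, by omega⟩ ≤ f ⟨(d : ℕ) + m, by omega⟩ := by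
            simp only [hf]; linarith [hstep, hnp]
          have heqidx : ((⟨(d : ℕ) + m + 1, by omega⟩ : Fin n))
              = (⟨(d : ℕ) + (m + 1), hm⟩ : Fin n) := by ext; simp; omega
          rw [heqidx] at hle
          exact le_trans hle (ihm (by omega))
    have hkey := key ((i : ℕ) - (d : ℕ)) (by omega)
    have : ((⟨(d : ℕ) + ((i : ℕ) - (d : ℕ)), by omega⟩ : Fin n)) = i := by
      ext; simp; omega
    rwa [this] at hkey
end

section
/- Soundness of elementary eliminator arguments: Let u(0), …, u(n−1) be an upper hull sequence, let r, s ∈ ℝ² with r.1 < s.1, let μ = m(r, s), and let d be an index such that (d = 0 or m(u(d−1), u(d)) ≥ μ) and (d = n−1 or μ ≥ m(u(d), u(d+1))). If u(d) lies strictly below the line through r and s, i.e. u(d).2 < r.2 + μ·(u(d).1 − r.1), then every point u(i) of the chain lies strictly below that line: u(i).2 < r.2 + μ·(u(i).1 − r.1) for all i. -/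
theorem elementary_eliminator_argument_sound
    {n : ℕ} (u : Fin n → ℝ × ℝ) (hu : IsUpperHullSeq u)
    (r s : ℝ × ℝ) (hrs : r.1 < s.1) (d : Fin n)
    (hd : Sandwiched u d (slopeOf r s))
    (hbelow : (u d).2 < r.2 + slopeOf r s * ((u d).1 - r.1)) :
    ∀ i : Fin n, (u i).2 < r.2 + slopeOf r s * ((u i).1 - r.1) := by
  obtain ⟨hmono, hsl⟩ := hu
  set μ := slopeOf r s with hμ
  have hx : ∀ (j : ℕ) (h : j + 1 < n), (u ⟨j, by omega⟩).1 < (u ⟨j + 1, h⟩).1 := by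
    intro j h
    exact hmono (by simp [Fin.lt_def])
  -- step: slope ≤ μ gives vertical-distance inequality forward
  have hstep_le : ∀ (j : ℕ) (h : j + 1 < n),
      slopeOf (u ⟨j, by omega⟩) (u ⟨j + 1, h⟩) ≤ μ →
      (u ⟨j + 1, h⟩).2 - (r.2 + μ * ((u ⟨j + 1, h⟩).1 - r.1))
        ≤ (u ⟨j, by omega⟩).2 - (r.2 + μ * ((u ⟨j, by omega⟩).1 - r.1)) := by
    intro j h hle
    have hxlt := hx j h
    rw [slopeOf, div_le_iff₀ (by linarith)] at hle
    nlinarith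
  have hstep_ge : ∀ (j : ℕ) (h : j + 1 < n),
      μ ≤ slopeOf (u ⟨j, by omega⟩) (u ⟨j + 1, h⟩) →
      (u ⟨j, by omega⟩).2 - (r.2 + μ * ((u ⟨j, by omega⟩).1 - r.1))
        ≤ (u ⟨j + 1, h⟩).2 - (r.2 + μ * ((u ⟨j + 1, h⟩).1 - r.1)) := by
    intro j h hle
    have hxlt := hx j h
    rw [slopeOf, le_div_iff₀ (by linarith)] at hle
    nlinarith
  -- slopes antitone
  have Santi : ∀ (a b : ℕ) (hab : a ≤ b) (h : b + 1 < n),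
      slopeOf (u ⟨b, by omega⟩) (u ⟨b + 1, h⟩)
        ≤ slopeOf (u ⟨a, by omega⟩) (u ⟨a + 1, by omega⟩) := by
    intro a b hab
    induction b with
    | zero =>
      intro h
      have : a = 0 := by omega
      subst this; exact le_refl _
    | succ b ih =>
      intro h
      rcases Nat.eq_or_lt_of_le hab with heq | hlt
      · subst heq; exact le_refl _
      · have hab' : a ≤ b := by omega
        have h1 : b + 2 < n := by omega
        have h2 := hsl b h1
        have h3 := ih hab' (by omega)
        have e1 : (⟨b + 1 + 1, h⟩ : Fin n) = ⟨b + 2, h1⟩ := rfl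
        rw [e1]
        linarith
  -- going right from d
  have key1 : ∀ (k : ℕ) (h : (d : ℕ) + k < n),
      (u ⟨(d : ℕ) + k, h⟩).2 - (r.2 + μ * ((u ⟨(d : ℕ) + k, h⟩).1 - r.1))
        ≤ (u d).2 - (r.2 + μ * ((u d).1 - r.1)) := by
    intro k
    induction k with
    | zero =>
      intro h
      have : (⟨(d : ℕ) + 0, h⟩ : Fin n) = d := by
        ext; simp
      rw [this]
    | succ k ih =>
      intro h
      have hk : (d : ℕ) + k < n := by omega
      have hk1 : (d : ℕ) + k + 1 < n := by omega
      have hdn : (d : ℕ) + 1 < n := by omega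
      have hSd : slopeOf (u d) (u ⟨(d : ℕ) + 1, hdn⟩) ≤ μ := by
        rcases hd.2 with h0 | ⟨h', hle⟩
        · omega
        · exact hle
      have hS : slopeOf (u ⟨(d : ℕ) + k, hk⟩) (u ⟨(d : ℕ) + k + 1, hk1⟩) ≤ μ := by
        have := Santi (d : ℕ) ((d : ℕ) + k) (by omega) hk1
        have e : (⟨(d : ℕ), by omega⟩ : Fin n) = d := by ext; simp
        rw [e] at this
        linarith
      have := hstep_le ((d : ℕ) + k) hk1 hS
      have e2 : (⟨(d : ℕ) + (k + 1), h⟩ : Fin n) = ⟨(d : ℕ) + k + 1, hk1⟩ := by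
        ext; simp; omega
      rw [e2]
      linarith [ih hk]
  -- going left from d
  have key2 : ∀ (k : ℕ), k ≤ (d : ℕ) →
      (u ⟨(d : ℕ) - k, by omega⟩).2 - (r.2 + μ * ((u ⟨(d : ℕ) - k, by omega⟩).1 - r.1))
        ≤ (u d).2 - (r.2 + μ * ((u d).1 - r.1)) := by
    intro k
    induction k with
    | zero =>
      intro h
      have : (⟨(d : ℕ) - 0, by omega⟩ : Fin n) = d := by ext; simp
      rw [this]
    | succ k ih =>
      intro h
      have hk : k ≤ (d : ℕ) := by omega
      have hpos : 0 < (d : ℕ) := by omega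
      have hdn : (d : ℕ) - 1 + 1 < n := by omega
      have hS0 : μ ≤ slopeOf (u ⟨(d : ℕ) - 1, by omega⟩) (u ⟨(d : ℕ) - 1 + 1, hdn⟩) := by
        rcases hd.1 with h0 | ⟨h', hle⟩
        · omega
        · have e : (⟨(d : ℕ) - 1 + 1, hdn⟩ : Fin n) = d := by ext; simp; omega
          rw [e]
          exact hle
      have hj : (d : ℕ) - (k + 1) + 1 < n := by omega
      have hS : μ ≤ slopeOf (u ⟨(d : ℕ) - (k + 1), by omega⟩) (u ⟨(d : ℕ) - (k + 1) + 1, hj⟩) := by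
        have := Santi ((d : ℕ) - (k + 1)) ((d : ℕ) - 1) (by omega) hdn
        linarith
      have hstep := hstep_ge ((d : ℕ) - (k + 1)) hj hS
      have e2 : (⟨(d : ℕ) - (k + 1) + 1, hj⟩ : Fin n) = ⟨(d : ℕ) - k, by omega⟩ := by
        ext; simp; omega
      rw [e2] at hstep
      linarith [ih hk]
  intro i
  rcases le_or_gt (d : ℕ) (i : ℕ) with hle | hlt
  · have h := key1 ((i : ℕ) - (d : ℕ)) (by omega)
    have e : (⟨(d : ℕ) + ((i : ℕ) - (d : ℕ)), by omega⟩ : Fin n) = i := by ext; simp; omega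
    rw [e] at h
    linarith
  · have h := key2 ((d : ℕ) - (i : ℕ)) (by omega)
    have e : (⟨(d : ℕ) - ((d : ℕ) - (i : ℕ)), by omega⟩ : Fin n) = i := by ext; simp; omega
    rw [e] at h
    linarith
end

section
/- Soundness of elementary convex arguments: Let U and N₁, …, N_t be upper hull sequences, let a be an index of U and b₁, …, b_t indices of N₁, …, N_t respectively, and let m_ℓ ∈ ℝ. Suppose that: (i) (a = 0 or m(U(a−1), U(a)) ≥ m_ℓ) and (a is the last index of U or m_ℓ ≥ m(U(a), U(a+1))); (ii) for every k, (b_k = 0 or m(N_k(b_k−1), N_k(b_k)) ≥ m_ℓ) and (b_k is the last index of N_k or m_ℓ ≥ m(N_k(b_k), N_k(b_k+1))); and (iii) for every k, N_k(b_k).2 ≤ U(a).2 + m_ℓ·(N_k(b_k).1 − U(a).1). Then U(a) is an upper-hull point of the union of the sets of points of U, N₁, …, N_t. -/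
/-- `p` is an upper-hull point of `S`: it belongs to `S` and admits a
supporting line of some slope `m` lying above all of `S`. -/
def IsUpperHullPoint (S : Set (ℝ × ℝ)) (p : ℝ × ℝ) : Prop :=
  p ∈ S ∧ ∃ m : ℝ, ∀ q ∈ S, q.2 ≤ p.2 + m * (q.1 - p.1)

private lemma slope_mul (p q : ℝ × ℝ) (h : p.1 < q.1) :
    q.2 = p.2 + slopeOf p q * (q.1 - p.1) := by
  have h' : q.1 - p.1 > 0 := by linarith
  unfold slopeOf
  field_simp
  ring

private lemma slopes_anti {n : ℕ} (u : Fin n → ℝ × ℝ) (hu : IsUpperHullSeq u) :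
    ∀ (j i : ℕ) (hij : i ≤ j) (hj : j + 1 < n),
      slopeOf (u ⟨j, by omega⟩) (u ⟨j + 1, hj⟩) ≤
        slopeOf (u ⟨i, by omega⟩) (u ⟨i + 1, by omega⟩) := by
  intro j
  induction j with
  | zero =>
    intro i hij hj
    have : i = 0 := by omega
    subst this
    exact le_refl _
  | succ j ih =>
    intro i hij hj
    rcases Nat.eq_or_lt_of_le hij with h | h
    · subst h; exact le_refl _
    · have h1 : i ≤ j := by omega
      have h2 : j + 2 < n := by omega
      exact le_of_lt (lt_of_lt_of_le (hu.2 j h2) (ih i h1 (by omega)))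

private lemma key_aux {n : ℕ} (u : Fin n → ℝ × ℝ) (hu : IsUpperHullSeq u)
    (i : ℕ) (hi : i < n) (μ : ℝ)
    (hl : i = 0 ∨ μ ≤ slopeOf (u ⟨i - 1, by omega⟩) (u ⟨i, hi⟩))
    (hr : i = n - 1 ∨ ∃ h : i + 1 < n, slopeOf (u ⟨i, hi⟩) (u ⟨i + 1, h⟩) ≤ μ) :
    ∀ (j : ℕ) (hj : j < n),
      (u ⟨j, hj⟩).2 ≤ (u ⟨i, hi⟩).2 + μ * ((u ⟨j, hj⟩).1 - (u ⟨i, hi⟩).1) := by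
  have hx : ∀ (k l : ℕ) (hk : k < n) (hl : l < n), k < l → (u ⟨k, hk⟩).1 < (u ⟨l, hl⟩).1 :=
    fun k l hk hl hkl => hu.1 (show (⟨k, hk⟩ : Fin n) < ⟨l, hl⟩ from hkl)
  intro j hj
  rcases lt_trichotomy j i with hlt | heq | hgt
  · -- j < i : go backwards
    have hi0 : 0 < i := by omega
    obtain ⟨i', rfl⟩ : ∃ i', i = i' + 1 := ⟨i - 1, by omega⟩
    have hsl : μ ≤ slopeOf (u ⟨i', by omega⟩) (u ⟨i' + 1, hi⟩) := by
      rcases hl with h | h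
      · omega
      · exact h
    have main : ∀ (d : ℕ), 0 < d → ∀ (j : ℕ) (hj : j < n), j + d = i' + 1 →
        (u ⟨j, hj⟩).2 ≤ (u ⟨i' + 1, hi⟩).2 + μ * ((u ⟨j, hj⟩).1 - (u ⟨i' + 1, hi⟩).1) := by
      intro d
      induction d with
      | zero => omega
      | succ d ih =>
        intro _ j hj hji
        rcases Nat.eq_zero_or_pos d with hd | hd
        · subst hd
          have hji' : j = i' := by omega
          subst hji'
          have hstep := slope_mul (u ⟨j, hj⟩) (u ⟨j + 1, hi⟩) (hx j (j + 1) hj hi (by omega))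
          have hΔ : (u ⟨j, hj⟩).1 < (u ⟨j + 1, hi⟩).1 := hx j (j + 1) hj hi (by omega)
          nlinarith [hsl, hstep, hΔ]
        · have hj1 : j + 1 < n := by omega
          have ihj := ih hd (j + 1) hj1 (by omega)
          have hstep := slope_mul (u ⟨j, hj⟩) (u ⟨j + 1, hj1⟩) (hx j (j + 1) hj hj1 (by omega))
          have hΔ : (u ⟨j, hj⟩).1 < (u ⟨j + 1, hj1⟩).1 := hx j (j + 1) hj hj1 (by omega)
          have hanti : slopeOf (u ⟨i', by omega⟩) (u ⟨i' + 1, hi⟩) ≤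
              slopeOf (u ⟨j, by omega⟩) (u ⟨j + 1, hj1⟩) :=
            slopes_anti u hu i' j (by omega) hi
          nlinarith [hsl, hstep, hΔ, hanti, ihj]
    exact main (i' + 1 - j) (by omega) j hj (by omega)
  · subst heq
    simp
  · -- i < j : go forwards
    obtain ⟨hi1, hsl⟩ : ∃ h : i + 1 < n, slopeOf (u ⟨i, hi⟩) (u ⟨i + 1, h⟩) ≤ μ := by
      rcases hr with h | h
      · omega
      · exact h
    have main : ∀ (j : ℕ), i + 1 ≤ j → ∀ (hj : j < n),
        (u ⟨j, hj⟩).2 ≤ (u ⟨i, hi⟩).2 + μ * ((u ⟨j, hj⟩).1 - (u ⟨i, hi⟩).1) := by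
      refine Nat.le_induction ?_ ?_
      · intro hj
        have hstep := slope_mul (u ⟨i, hi⟩) (u ⟨i + 1, hj⟩) (hx i (i + 1) hi hj (by omega))
        have hΔ : (u ⟨i, hi⟩).1 < (u ⟨i + 1, hj⟩).1 := hx i (i + 1) hi hj (by omega)
        nlinarith [hsl, hstep, hΔ]
      · intro j hij ih hj1
        have hjn : j < n := by omega
        have ihj := ih hjn
        have hstep := slope_mul (u ⟨j, hjn⟩) (u ⟨j + 1, hj1⟩) (hx j (j + 1) hjn hj1 (by omega))
        have hΔ : (u ⟨j, hjn⟩).1 < (u ⟨j + 1, hj1⟩).1 := hx j (j + 1) hjn hj1 (by omega)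
        have hanti : slopeOf (u ⟨j, hjn⟩) (u ⟨j + 1, hj1⟩) ≤
            slopeOf (u ⟨i, hi⟩) (u ⟨i + 1, hi1⟩) :=
          slopes_anti u hu j i (by omega) hj1
        nlinarith [hsl, hstep, hΔ, hanti, ihj]
    exact main j (by omega) hj

private lemma key {n : ℕ} (u : Fin n → ℝ × ℝ) (hu : IsUpperHullSeq u)
    (i : Fin n) (μ : ℝ) (hs : Sandwiched u i μ) (j : Fin n) :
    (u j).2 ≤ (u i).2 + μ * ((u j).1 - (u i).1) := by
  have hl : (i : ℕ) = 0 ∨ μ ≤ slopeOf (u ⟨(i : ℕ) - 1, by omega⟩) (u ⟨(i : ℕ), i.isLt⟩) := by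
    rcases hs.1 with h | ⟨_, h⟩
    · exact Or.inl h
    · exact Or.inr h
  exact key_aux u hu i i.isLt μ hl hs.2 j j.isLt

theorem elementary_convex_argument_sound
    {n t : ℕ} (U : Fin n → ℝ × ℝ) (hU : IsUpperHullSeq U)
    (nk : Fin t → ℕ) (N : ∀ k : Fin t, Fin (nk k) → ℝ × ℝ)
    (hN : ∀ k, IsUpperHullSeq (N k))
    (a : Fin n) (bIdx : ∀ k : Fin t, Fin (nk k)) (mℓ : ℝ)
    (ha : Sandwiched U a mℓ)
    (hb : ∀ k, Sandwiched (N k) (bIdx k) mℓ)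
    (hbelow : ∀ k, (N k (bIdx k)).2 ≤ (U a).2 + mℓ * ((N k (bIdx k)).1 - (U a).1)) :
    IsUpperHullPoint (Set.range U ∪ ⋃ k, Set.range (N k)) (U a) := by
  constructor
  · exact Or.inl ⟨a, rfl⟩
  · refine ⟨mℓ, ?_⟩
    intro q hq
    rcases hq with ⟨j, rfl⟩ | hq
    · exact key U hU a mℓ ha j
    · obtain ⟨S, ⟨k, rfl⟩, hqS⟩ := hq
      obtain ⟨j, rfl⟩ := hqS
      have h1 := key (N k) (hN k) (bIdx k) mℓ (hb k) j
      have h2 := hbelow k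
      linarith
end

section
/- Soundness of block convex arguments: Let U and N₁, …, N_t be upper hull sequences, let a < b be indices of U, and write m_ℓ = m(U(a), U(b)). Suppose there exist slopes m_a, m_b ∈ ℝ and, for every k, indices c_k, d_k, e_k of N_k such that: (i) m_a is sandwiched at a in U and m_b is sandwiched at b in U (where a slope μ is 'sandwiched at index i in a chain u' if (i = 0 or m(u(i−1), u(i)) ≥ μ) and (i is the last index or μ ≥ m(u(i), u(i+1)))); (ii) for every k, m_a is sandwiched at c_k in N_k and N_k(c_k).2 ≤ U(a).2 + m_a·(N_k(c_k).1 − U(a).1); (iii) for every k, m_b is sandwiched at e_k in N_k and N_k(e_k).2 ≤ U(b).2 + m_b·(N_k(e_k).1 − U(b).1); (iv) for every k, m_ℓ is sandwiched at d_k in N_k and N_k(d_k).2 ≤ U(a).2 + m_ℓ·(N_k(d_k).1 − U(a).1). Then every point U(p) with a ≤ p ≤ b is an upper-hull point of the union of the sets of points of U, N₁, …, N_t. -/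
lemma seg_slope_mul {n : ℕ} {u : Fin n → ℝ × ℝ} (hx : StrictMono fun i => (u i).1)
    {i j : Fin n} (hij : i < j) :
    slopeOf (u i) (u j) * ((u j).1 - (u i).1) = (u j).2 - (u i).2 := by
  have h : (u i).1 < (u j).1 := hx hij
  unfold slopeOf
  exact div_mul_cancel₀ _ (sub_ne_zero.2 (ne_of_gt h))

lemma slope_antitone {n : ℕ} {u : Fin n → ℝ × ℝ} (hU : IsUpperHullSeq u)
    {i j : ℕ} (hij : i ≤ j) (hj : j + 1 < n) :
    slopeOf (u ⟨j, by omega⟩) (u ⟨j + 1, hj⟩) ≤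
      slopeOf (u ⟨i, by omega⟩) (u ⟨i + 1, by omega⟩) := by
  induction j, hij using Nat.le_induction with
  | base => exact le_rfl
  | succ j hij ih =>
    have hj' : j + 1 < n := by omega
    exact le_trans (le_of_lt (hU.2 j (by omega))) (ih hj')


lemma fin_eq {n : ℕ} {i : Fin n} {x : ℕ} (hx : x < n) (h : x = (i : ℕ)) :
    (⟨x, hx⟩ : Fin n) = i := Fin.ext h

lemma fin_eq' {n : ℕ} {x y : ℕ} (hx : x < n) (hy : y < n) (h : x = y) :
    (⟨x, hx⟩ : Fin n) = ⟨y, hy⟩ := Fin.ext h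

lemma sandwiched_support {n : ℕ} {u : Fin n → ℝ × ℝ} (hU : IsUpperHullSeq u)
    {i : Fin n} {μ : ℝ} (hs : Sandwiched u i μ) (j : Fin n) :
    (u j).2 ≤ (u i).2 + μ * ((u j).1 - (u i).1) := by
  obtain ⟨hsL, hsR⟩ := hs
  have fwd : ∀ m : ℕ, ∀ h : (i : ℕ) + m < n,
      (u ⟨(i : ℕ) + m, h⟩).2 ≤ (u i).2 + μ * ((u ⟨(i : ℕ) + m, h⟩).1 - (u i).1) := by
    intro m
    induction m with
    | zero =>
      intro h
      have : (⟨(i : ℕ) + 0, h⟩ : Fin n) = i := by first | exact fin_eq _ (by omega) | exact fin_eq' _ _ (by omega)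
      rw [this]; linarith
    | succ m ih =>
      intro h
      have hm : (i : ℕ) + m < n := by omega
      obtain ⟨hi1, hslope⟩ : ∃ hh : (i : ℕ) + 1 < n,
          slopeOf (u i) (u ⟨(i : ℕ) + 1, hh⟩) ≤ μ := by
        rcases hsR with h0 | h0
        · exfalso; omega
        · exact h0
      have hseg : slopeOf (u ⟨(i : ℕ) + m, hm⟩) (u ⟨(i : ℕ) + m + 1, by omega⟩) ≤
          slopeOf (u ⟨(i : ℕ), i.isLt⟩) (u ⟨(i : ℕ) + 1, hi1⟩) :=
        slope_antitone hU (Nat.le_add_right _ _) (by omega)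
      have hseg' : slopeOf (u ⟨(i : ℕ) + m, hm⟩) (u ⟨(i : ℕ) + m + 1, by omega⟩) ≤ μ := by
        have : (⟨(i : ℕ), i.isLt⟩ : Fin n) = i := Fin.ext rfl
        rw [this] at hseg
        exact le_trans hseg hslope
      have hlt : (⟨(i : ℕ) + m, hm⟩ : Fin n) < ⟨(i : ℕ) + m + 1, by omega⟩ := by
        simp [Fin.lt_def]
      have hx : (u ⟨(i : ℕ) + m, hm⟩).1 < (u ⟨(i : ℕ) + m + 1, by omega⟩).1 := hU.1 hlt
      have hy := seg_slope_mul hU.1 hlt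
      have hmul := mul_le_mul_of_nonneg_right hseg'
        (le_of_lt (sub_pos.2 hx))
      have hIH := ih hm
      have : (⟨(i : ℕ) + (m + 1), h⟩ : Fin n) = ⟨(i : ℕ) + m + 1, by omega⟩ :=
        by first | exact fin_eq _ (by omega) | exact fin_eq' _ _ (by omega)
      rw [this]
      nlinarith [hmul, hy, hIH]
  have bwd : ∀ m : ℕ, ∀ h : m ≤ (i : ℕ),
      (u ⟨(i : ℕ) - m, by omega⟩).2 ≤ (u i).2 + μ * ((u ⟨(i : ℕ) - m, by omega⟩).1 - (u i).1) := by
    intro m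
    induction m with
    | zero =>
      intro h
      have : (⟨(i : ℕ) - 0, by omega⟩ : Fin n) = i := by first | exact fin_eq _ (by omega) | exact fin_eq' _ _ (by omega)
      rw [this]; linarith
    | succ m ih =>
      intro h
      have hm : m ≤ (i : ℕ) := by omega
      obtain ⟨hpos, hslope⟩ : ∃ _ : 0 < (i : ℕ),
          μ ≤ slopeOf (u ⟨(i : ℕ) - 1, Nat.lt_of_le_of_lt (Nat.sub_le _ _) i.isLt⟩) (u i) := by
        rcases hsL with h0 | h0
        · exfalso; omega
        · exact h0
      -- rewrite u i as u ⟨(i-1)+1, _⟩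
      have hin : (i : ℕ) - 1 + 1 < n := by omega
      have hieq : (⟨(i : ℕ) - 1 + 1, hin⟩ : Fin n) = i := by first | exact fin_eq _ (by omega) | exact fin_eq' _ _ (by omega)
      have hslope' : μ ≤ slopeOf (u ⟨(i : ℕ) - 1, by omega⟩) (u ⟨(i : ℕ) - 1 + 1, hin⟩) := by
        rw [hieq]; exact hslope
      have hanti : slopeOf (u ⟨(i : ℕ) - 1, by omega⟩) (u ⟨(i : ℕ) - 1 + 1, hin⟩) ≤
          slopeOf (u ⟨(i : ℕ) - (m + 1), by omega⟩) (u ⟨(i : ℕ) - (m + 1) + 1, by omega⟩) :=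
        slope_antitone hU (by omega) hin
      have hseg : μ ≤ slopeOf (u ⟨(i : ℕ) - (m + 1), by omega⟩)
          (u ⟨(i : ℕ) - (m + 1) + 1, by omega⟩) := le_trans hslope' hanti
      have hlt : (⟨(i : ℕ) - (m + 1), by omega⟩ : Fin n) < ⟨(i : ℕ) - (m + 1) + 1, by omega⟩ := by
        simp [Fin.lt_def]
      have hx := hU.1 hlt
      have hy := seg_slope_mul hU.1 hlt
      have hmul := mul_le_mul_of_nonneg_right hseg (le_of_lt (sub_pos.2 hx))
      have hIH := ih hm
      have heq : (⟨(i : ℕ) - (m + 1) + 1, by omega⟩ : Fin n) = ⟨(i : ℕ) - m, by omega⟩ :=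
        by first | exact fin_eq _ (by omega) | exact fin_eq' _ _ (by omega)
      rw [heq] at hx hy hmul
      nlinarith [hmul, hy, hIH]
  rcases le_or_gt (i : ℕ) (j : ℕ) with hij | hij
  · have h : (i : ℕ) + ((j : ℕ) - (i : ℕ)) < n := by omega
    have heq : (⟨(i : ℕ) + ((j : ℕ) - (i : ℕ)), h⟩ : Fin n) = j := by first | exact fin_eq _ (by omega) | exact fin_eq' _ _ (by omega)
    have := fwd ((j : ℕ) - (i : ℕ)) h
    rwa [heq] at this
  · have h : (i : ℕ) - (j : ℕ) ≤ (i : ℕ) := Nat.sub_le _ _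
    have heq : (⟨(i : ℕ) - ((i : ℕ) - (j : ℕ)), by omega⟩ : Fin n) = j := by first | exact fin_eq _ (by omega) | exact fin_eq' _ _ (by omega)
    have := bwd ((i : ℕ) - (j : ℕ)) h
    rwa [heq] at this

lemma sandwiched_transfer {n : ℕ} {u : Fin n → ℝ × ℝ} (hU : IsUpperHullSeq u)
    {i : Fin n} {μ : ℝ} (hs : Sandwiched u i μ) {P : ℝ × ℝ}
    (hP : (u i).2 ≤ P.2 + μ * ((u i).1 - P.1)) (j : Fin n) :
    (u j).2 ≤ P.2 + μ * ((u j).1 - P.1) := by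
  have h := sandwiched_support hU hs j
  nlinarith [h, hP]

lemma line_dominate (A B P q : ℝ × ℝ) (ma mb mp : ℝ)
    (hAB : A.1 < B.1)
    (hmb : mb ≤ mp) (hma : mp ≤ ma)
    (hPA : A.2 ≤ P.2 + mp * (A.1 - P.1))
    (hPB : B.2 ≤ P.2 + mp * (B.1 - P.1))
    (hqa : q.2 ≤ A.2 + ma * (q.1 - A.1))
    (hqb : q.2 ≤ B.2 + mb * (q.1 - B.1))
    (hql : q.2 ≤ A.2 + slopeOf A B * (q.1 - A.1)) :
    q.2 ≤ P.2 + mp * (q.1 - P.1) := by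
  have hml : slopeOf A B * (B.1 - A.1) = B.2 - A.2 := by
    unfold slopeOf
    exact div_mul_cancel₀ _ (sub_ne_zero.2 (ne_of_gt hAB))
  rcases le_total q.1 A.1 with h1 | h1
  · nlinarith [mul_nonneg (sub_nonneg.2 hma) (sub_nonneg.2 h1)]
  rcases le_total B.1 q.1 with h2 | h2
  · nlinarith [mul_nonneg (sub_nonneg.2 hmb) (sub_nonneg.2 h2)]
  · -- A.1 ≤ q.1 ≤ B.1
    have e1 := mul_le_mul_of_nonneg_left hPA (by linarith : (0:ℝ) ≤ B.1 - q.1)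
    have e2 := mul_le_mul_of_nonneg_left hPB (by linarith : (0:ℝ) ≤ q.1 - A.1)
    have e3 := mul_le_mul_of_nonneg_left hql (by linarith : (0:ℝ) ≤ B.1 - A.1)
    have key : (B.1 - A.1) * (A.2 + slopeOf A B * (q.1 - A.1)) =
        (B.1 - q.1) * A.2 + (q.1 - A.1) * B.2 := by
      have : slopeOf A B * (q.1 - A.1) * (B.1 - A.1) =
          (B.2 - A.2) * (q.1 - A.1) := by
        rw [mul_comm (slopeOf A B) (q.1 - A.1), mul_assoc, hml]; ring
      nlinarith [this]
    have hpos : (0:ℝ) < B.1 - A.1 := by linarith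
    nlinarith [e1, e2, e3, key, hpos]

theorem block_convex_argument_sound
    {n t : ℕ} (U : Fin n → ℝ × ℝ) (hU : IsUpperHullSeq U)
    (nk : Fin t → ℕ) (N : ∀ k : Fin t, Fin (nk k) → ℝ × ℝ)
    (hN : ∀ k, IsUpperHullSeq (N k))
    (a b : Fin n) (hab : a < b)
    (ma mb : ℝ)
    (cIdx dIdx eIdx : ∀ k : Fin t, Fin (nk k))
    -- (i) `ma` is sandwiched at `a` in `U` and `mb` is sandwiched at `b` in `U`:
    (hUa : Sandwiched U a ma) (hUb : Sandwiched U b mb)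
    -- (ii) for every `k`, `ma` is sandwiched at `cIdx k` in `N k` and
    -- `N k (cIdx k)` lies below the line of slope `ma` through `U a`:
    (hc : ∀ k, Sandwiched (N k) (cIdx k) ma ∧
      (N k (cIdx k)).2 ≤ (U a).2 + ma * ((N k (cIdx k)).1 - (U a).1))
    -- (iii) for every `k`, `mb` is sandwiched at `eIdx k` in `N k` and
    -- `N k (eIdx k)` lies below the line of slope `mb` through `U b`:
    (he : ∀ k, Sandwiched (N k) (eIdx k) mb ∧
      (N k (eIdx k)).2 ≤ (U b).2 + mb * ((N k (eIdx k)).1 - (U b).1))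
    -- (iv) for every `k`, `m(U a, U b)` is sandwiched at `dIdx k` in `N k` and
    -- `N k (dIdx k)` lies below the line through `U a` and `U b`:
    (hd : ∀ k, Sandwiched (N k) (dIdx k) (slopeOf (U a) (U b)) ∧
      (N k (dIdx k)).2 ≤ (U a).2 + slopeOf (U a) (U b) * ((N k (dIdx k)).1 - (U a).1)) :
    ∀ p : Fin n, a ≤ p → p ≤ b →
      IsUpperHullPoint (Set.range U ∪ ⋃ k, Set.range (N k)) (U p) := by
  intro p hap hpb
  refine ⟨Or.inl ⟨p, rfl⟩, ?_⟩
  have habn : (a : ℕ) < (b : ℕ) := hab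
  by_cases hpa : p = a
  · subst hpa
    refine ⟨ma, ?_⟩
    rintro q (⟨j, rfl⟩ | hq)
    · exact sandwiched_support hU hUa j
    · simp only [Set.mem_iUnion, Set.mem_range] at hq
      obtain ⟨k, j, rfl⟩ := hq
      exact sandwiched_transfer (hN k) (hc k).1 (hc k).2 j
  by_cases hpb' : p = b
  · subst hpb'
    refine ⟨mb, ?_⟩
    rintro q (⟨j, rfl⟩ | hq)
    · exact sandwiched_support hU hUb j
    · simp only [Set.mem_iUnion, Set.mem_range] at hq
      obtain ⟨k, j, rfl⟩ := hq
      exact sandwiched_transfer (hN k) (he k).1 (he k).2 j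
  -- now a < p < b
  have hap' : (a : ℕ) < (p : ℕ) := by
    have h1 : (a : ℕ) ≤ (p : ℕ) := hap
    have h2 : (a : ℕ) ≠ (p : ℕ) := fun h => hpa (Fin.ext h.symm)
    omega
  have hpb'' : (p : ℕ) < (b : ℕ) := by
    have h1 : (p : ℕ) ≤ (b : ℕ) := hpb
    have h2 : (p : ℕ) ≠ (b : ℕ) := fun h => hpb' (Fin.ext h)
    omega
  have hpn : (p : ℕ) + 1 < n := by have := b.isLt; omega
  set mp := slopeOf (U p) (U ⟨(p : ℕ) + 1, hpn⟩) with hmp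
  -- mp is sandwiched at p in U
  have hsp : Sandwiched U p mp := by
    constructor
    · refine Or.inr ⟨by omega, ?_⟩
      have h2n : (p : ℕ) - 1 + 2 < n := by omega
      have hstep := hU.2 ((p : ℕ) - 1) h2n
      have e1 : (⟨(p : ℕ) - 1 + 1, by omega⟩ : Fin n) = p := fin_eq _ (by omega)
      have e2 : (⟨(p : ℕ) - 1 + 2, h2n⟩ : Fin n) = (⟨(p : ℕ) + 1, hpn⟩ : Fin n) :=
        fin_eq' _ _ (by omega)
      rw [e1, e2] at hstep
      exact le_of_lt hstep
    · exact Or.inr ⟨hpn, le_rfl⟩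
  -- mp ≤ ma
  have han : (a : ℕ) + 1 < n := by have := b.isLt; omega
  have hma' : slopeOf (U a) (U ⟨(a : ℕ) + 1, han⟩) ≤ ma := by
    rcases hUa.2 with h0 | h0
    · exfalso; have := b.isLt; omega
    · obtain ⟨h1, h2⟩ := h0
      have : (⟨(a : ℕ) + 1, h1⟩ : Fin n) = ⟨(a : ℕ) + 1, han⟩ := fin_eq' _ _ rfl
      rwa [this] at h2
  have hmpa : mp ≤ ma := by
    have := slope_antitone hU (show (a : ℕ) ≤ (p : ℕ) by omega) hpn
    have ea : (⟨(a : ℕ), by omega⟩ : Fin n) = a := fin_eq _ rfl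
    have ep : (⟨(p : ℕ), by omega⟩ : Fin n) = p := fin_eq _ rfl
    rw [ea, ep] at this
    exact le_trans this hma'
  -- mb ≤ mp
  have hbn1 : (b : ℕ) - 1 + 1 < n := by have := b.isLt; omega
  have hmb' : mb ≤ slopeOf (U ⟨(b : ℕ) - 1, by omega⟩) (U ⟨(b : ℕ) - 1 + 1, hbn1⟩) := by
    rcases hUb.1 with h0 | h0
    · exfalso; omega
    · obtain ⟨h1, h2⟩ := h0
      have eb : (⟨(b : ℕ) - 1 + 1, hbn1⟩ : Fin n) = b := fin_eq _ (by omega)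
      rw [eb]
      have : (⟨(b : ℕ) - 1, Nat.lt_of_le_of_lt (Nat.sub_le _ _) b.isLt⟩ : Fin n) =
          ⟨(b : ℕ) - 1, by omega⟩ := fin_eq' _ _ rfl
      rwa [this] at h2
  have hmbp : mb ≤ mp := by
    have := slope_antitone hU (show (p : ℕ) ≤ (b : ℕ) - 1 by omega) hbn1
    have ep : (⟨(p : ℕ), by omega⟩ : Fin n) = p := fin_eq _ rfl
    rw [ep] at this
    exact le_trans hmb' this
  -- supporting line of U at p
  have hUsup : ∀ j : Fin n, (U j).2 ≤ (U p).2 + mp * ((U j).1 - (U p).1) :=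
    sandwiched_support hU hsp
  refine ⟨mp, ?_⟩
  rintro q (⟨j, rfl⟩ | hq)
  · exact hUsup j
  · simp only [Set.mem_iUnion, Set.mem_range] at hq
    obtain ⟨k, j, rfl⟩ := hq
    have hqa := sandwiched_transfer (hN k) (hc k).1 (hc k).2 j
    have hqb := sandwiched_transfer (hN k) (he k).1 (he k).2 j
    have hql := sandwiched_transfer (hN k) (hd k).1 (hd k).2 j
    exact line_dominate (U a) (U b) (U p) (N k j) ma mb mp (hU.1 hab)
      hmbp hmpa (hUsup a) (hUsup b) hqa hqb hql
end

section
/- Let u(0), …, u(n−1) be an upper hull sequence. Then every point u(i) is an upper-hull point of the set {u(0), …, u(n−1)}; that is, all vertices of a concave chain lie on the upper hull of its point set. -/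
theorem concave_chain_vertices_on_upper_hull
    {n : ℕ} (u : Fin n → ℝ × ℝ) (hu : IsUpperHullSeq u) :
    ∀ i : Fin n, IsUpperHullPoint (Set.range u) (u i) := by
  classical
  set X : ℕ → ℝ := fun j => if h : j < n then (u ⟨j, h⟩).1 else 0 with hX
  set Y : ℕ → ℝ := fun j => if h : j < n then (u ⟨j, h⟩).2 else 0 with hY
  set S : ℕ → ℝ := fun j => (Y (j + 1) - Y j) / (X (j + 1) - X j) with hS
  have hXval : ∀ (j : ℕ) (h : j < n), X j = (u ⟨j, h⟩).1 := fun j h => by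
    simp [hX, h]
  have hYval : ∀ (j : ℕ) (h : j < n), Y j = (u ⟨j, h⟩).2 := fun j h => by
    simp [hY, h]
  have hx : ∀ j k : ℕ, j < k → k < n → X j < X k := by
    intro j k hjk hk
    rw [hXval j (by omega), hXval k hk]
    exact hu.1 (show (⟨j, by omega⟩ : Fin n) < ⟨k, hk⟩ from hjk)
  have hSval : ∀ (j : ℕ) (hj : j + 2 ≤ n),
      S j = slopeOf (u ⟨j, by omega⟩) (u ⟨j + 1, by omega⟩) := by
    intro j hj
    have e1 := hXval j (by omega : j < n)
    have e2 := hXval (j+1) (by omega : j + 1 < n)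
    have e3 := hYval j (by omega : j < n)
    have e4 := hYval (j+1) (by omega : j + 1 < n)
    rw [hS]
    simp only [slopeOf, e1, e2, e3, e4]
  have hseq : ∀ j : ℕ, j + 2 ≤ n → Y (j + 1) - Y j = S j * (X (j + 1) - X j) := by
    intro j hj
    have hne : X (j + 1) - X j ≠ 0 := by
      have := hx j (j + 1) (by omega) (by omega); linarith
    rw [hS]; field_simp
  have hdec : ∀ j : ℕ, j + 2 < n → S (j + 1) < S j := by
    intro j hj
    rw [hSval (j+1) (by omega), hSval j (by omega)]
    exact hu.2 j hj
  have santi : ∀ i j : ℕ, i ≤ j → j + 2 ≤ n → S j ≤ S i := by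
    intro i j hij
    induction j, hij using Nat.le_induction with
    | base => intro _; exact le_rfl
    | succ k hk ih =>
      intro h2
      exact le_trans (le_of_lt (hdec k (by omega))) (ih (by omega))
  have A : ∀ i j : ℕ, i < j → j < n → Y j - Y i ≤ S i * (X j - X i) := by
    intro i j hij
    induction j, hij using Nat.le_induction with
    | base => intro hj; have := hseq i (by omega); linarith
    | succ k hk ih =>
      intro hk1
      have h1 := ih (by omega)
      have h2 := hseq k (by omega)
      have h3 : S k ≤ S i := santi i k (by omega) (by omega)
      have h4 : 0 < X (k + 1) - X k := by
        have := hx k (k + 1) (by omega) (by omega); linarith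
      nlinarith
  have B : ∀ i : ℕ, i < n → ∀ d j : ℕ, j + d + 1 = i →
      S (i - 1) * (X i - X j) ≤ Y i - Y j := by
    intro i hi d
    induction d with
    | zero =>
      intro j hj
      have hj' : j = i - 1 := by omega
      have := hseq (i - 1) (by omega)
      have hi1 : i - 1 + 1 = i := by omega
      rw [hj']; rw [hi1] at this; linarith
    | succ d ih =>
      intro j hj
      have h1 := ih (j + 1) (by omega)
      have h2 := hseq j (by omega)
      have h3 : S (i - 1) ≤ S j := santi j (i - 1) (by omega) (by omega)
      have h4 : 0 < X (j + 1) - X j := by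
        have := hx j (j + 1) (by omega) (by omega); linarith
      nlinarith
  intro i
  refine ⟨⟨i, rfl⟩, ?_⟩
  set m : ℝ := if (i : ℕ) + 1 < n then S i else S ((i : ℕ) - 1) with hm
  refine ⟨m, ?_⟩
  rintro q ⟨j, rfl⟩
  rw [← hXval i i.2, ← hXval j j.2, ← hYval i i.2, ← hYval j j.2]
  rcases lt_trichotomy (j : ℕ) (i : ℕ) with h | h | h
  · -- j < i : need Y j ≤ Y i + m (X j - X i)
    have hB := B i i.2 ((i : ℕ) - (j : ℕ) - 1) j (by omega)
    have hxij : 0 < X i - X j := by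
      have := hx j i h i.2; linarith
    by_cases hc : (i : ℕ) + 1 < n
    · have hlt : S (i : ℕ) < S ((i : ℕ) - 1) := by
        have := hdec ((i : ℕ) - 1) (by omega)
        have : (i : ℕ) - 1 + 1 = i := by omega
        have := hdec ((i : ℕ) - 1) (by omega)
        rwa [show (i : ℕ) - 1 + 1 = i by omega] at this
      rw [hm, if_pos hc]
      nlinarith
    · rw [hm, if_neg hc]; linarith
  · have : j = i := Fin.ext h
    subst this; simp
  · -- i < j
    have hc : (i : ℕ) + 1 < n := by omega
    rw [hm, if_pos hc]
    have := A i j h j.2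
    linarith
end

section
/- Let b, c, d ≥ 0 be real numbers with c ≤ d + b, d ≤ c + b, c + b > 0 and d + b > 0, and let m₁, …, m_p and m′₁, …, m′_q be nonnegative real numbers with Σᵢ mᵢ ≥ c + b and Σⱼ m′ⱼ ≥ d + b. Then c + d ≤ Σᵢ mᵢ·log₂(1 + d/(c + b)) + Σⱼ m′ⱼ·log₂(1 + c/(d + b)). (This is the key inequality in the inductive analysis of the number of comparisons performed by the Quick Union Maxima algorithm.) -/
lemma key_logb (x : ℝ) (hx0 : 0 ≤ x) (hx1 : x ≤ 1) : x ≤ Real.logb 2 (1 + x) := by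
  rw [Real.le_logb_iff_rpow_le one_lt_two (by linarith)]
  have h := convexOn_exp.2 (Set.mem_univ (0:ℝ)) (Set.mem_univ (Real.log 2))
    (by linarith : (0:ℝ) ≤ 1 - x) hx0 (by ring)
  simp only [smul_eq_mul, mul_zero, zero_add, Real.exp_zero, Real.exp_log two_pos] at h
  rw [Real.rpow_def_of_pos two_pos]
  calc Real.exp (Real.log 2 * x) = Real.exp (x * Real.log 2) := by ring_nf
    _ ≤ (1 - x) * 1 + x * 2 := h
    _ = 1 + x := by ring

theorem quick_union_maxima_key_inequality
    (b c d : ℝ) (hb : 0 ≤ b) (hc : 0 ≤ c) (hd : 0 ≤ d)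
    (hcb : c ≤ d + b) (hdb : d ≤ c + b)
    (hcb0 : 0 < c + b) (hdb0 : 0 < d + b)
    (p q : ℕ) (m : Fin p → ℝ) (m' : Fin q → ℝ)
    (hm : ∀ i, 0 ≤ m i) (hm' : ∀ j, 0 ≤ m' j)
    (hsum : c + b ≤ ∑ i, m i) (hsum' : d + b ≤ ∑ j, m' j) :
    c + d ≤ (∑ i, m i * Real.logb 2 (1 + d / (c + b))) +
      ∑ j, m' j * Real.logb 2 (1 + c / (d + b)) := by
  have hx1 : d / (c + b) ≤ 1 := (div_le_one hcb0).2 hdb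
  have hx0 : 0 ≤ d / (c + b) := div_nonneg hd hcb0.le
  have hy1 : c / (d + b) ≤ 1 := (div_le_one hdb0).2 hcb
  have hy0 : 0 ≤ c / (d + b) := div_nonneg hc hdb0.le
  have hL1 := key_logb _ hx0 hx1
  have hL2 := key_logb _ hy0 hy1
  have h1 : d ≤ (∑ i, m i) * Real.logb 2 (1 + d / (c + b)) := by
    calc d = (c + b) * (d / (c + b)) := by field_simp
      _ ≤ (∑ i, m i) * Real.logb 2 (1 + d / (c + b)) :=
        mul_le_mul hsum hL1 hx0 (le_trans hcb0.le hsum)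
  have h2 : c ≤ (∑ j, m' j) * Real.logb 2 (1 + c / (d + b)) := by
    calc c = (d + b) * (c / (d + b)) := by field_simp
      _ ≤ (∑ j, m' j) * Real.logb 2 (1 + c / (d + b)) :=
        mul_le_mul hsum' hL2 hy0 (le_trans hdb0.le hsum')
  rw [← Finset.sum_mul, ← Finset.sum_mul]
  linarith
end

section
/- There exists a constant C > 0 such that the following holds: for every real c > 0 and every function T : ℕ × ℕ → ℝ satisfying (i) 0 ≤ T(n, κ) for all n, κ, (ii) T(n, κ) ≤ c·n whenever n ≤ 1 or κ ≤ 1, and (iii) for all n ≥ 2 and κ ≥ 2 there exist positive integers κ₁, κ₂ with κ₁ + κ₂ ≤ κ + 1 and T(n, κ) ≤ T(⌈n/2⌉, κ₁) + T(⌊n/2⌋, κ₂) + c·n, one has T(n, κ) ≤ C·c·n·(1 + log₂ κ) for all n ≥ 1 and κ ≥ 1. (This is the solution of the recursion t(n, κ) ≤ t(⌈n/2⌉, κ₁) + t(⌊n/2⌋, κ₂) with κ₁ + κ₂ ≤ κ + 1 governing the divide-and-conquer convex hull algorithm for chains partitionable into κ simple subchains.) -/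
open Real

private lemma logb_three_halves_le : Real.logb 2 (3/2) ≤ 3/5 := by
  have h1 : Real.logb 2 ((3/2:ℝ)^5) ≤ Real.logb 2 ((2:ℝ)^3) := by
    apply Real.logb_le_logb_of_le one_lt_two (by norm_num)
    norm_num
  rw [Real.logb_pow, Real.logb_pow, Real.logb_self_eq_one one_lt_two] at h1
  push_cast at h1
  linarith

private lemma key_logb_s19 (κ m : ℕ) (hκ : 2 ≤ κ) (hm1 : 1 ≤ m) (hm : 2 * m ≤ κ + 1) :
    1 + Real.logb 2 m ≤ 1 + Real.logb 2 κ - 2/5 := by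
  have hκ0 : (0:ℝ) < κ := by positivity
  have hlκ : (1:ℝ) ≤ Real.logb 2 κ := by
    have h : Real.logb 2 (2:ℝ) ≤ Real.logb 2 κ :=
      Real.logb_le_logb_of_le one_lt_two two_pos (by exact_mod_cast hκ)
    rwa [Real.logb_self_eq_one one_lt_two] at h
  rcases eq_or_lt_of_le hm1 with h1 | h2
  · rw [← h1]
    push_cast
    rw [Real.logb_one]
    linarith
  · have hm2 : 2 ≤ m := h2
    have hmr : (m:ℝ) ≤ (κ + 1) / 2 := by
      have : (2:ℝ) * m ≤ κ + 1 := by exact_mod_cast hm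
      linarith
    have h3 : Real.logb 2 m ≤ Real.logb 2 ((κ + 1) / 2) :=
      Real.logb_le_logb_of_le one_lt_two (by positivity) hmr
    have h4 : Real.logb 2 ((κ + 1) / 2) = Real.logb 2 ((κ:ℝ) + 1) - 1 := by
      rw [Real.logb_div (by positivity) (by norm_num), Real.logb_self_eq_one one_lt_two]
    have h5 : Real.logb 2 ((κ:ℝ) + 1) ≤ Real.logb 2 ((3/2) * κ) := by
      apply Real.logb_le_logb_of_le one_lt_two (by positivity)
      have : (2:ℝ) ≤ κ := by exact_mod_cast hκ
      linarith
    have h6 : Real.logb 2 ((3/2) * (κ:ℝ)) = Real.logb 2 (3/2) + Real.logb 2 κ :=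
      Real.logb_mul (by norm_num) (by positivity)
    have := logb_three_halves_le
    linarith

theorem divide_and_conquer_recursion_solution :
    ∃ C : ℝ, 0 < C ∧
      ∀ c : ℝ, 0 < c →
        ∀ T : ℕ × ℕ → ℝ,
          (∀ n κ : ℕ, 0 ≤ T (n, κ)) →
          (∀ n κ : ℕ, n ≤ 1 ∨ κ ≤ 1 → T (n, κ) ≤ c * n) →
          (∀ n κ : ℕ, 2 ≤ n → 2 ≤ κ →
            ∃ κ₁ κ₂ : ℕ, 0 < κ₁ ∧ 0 < κ₂ ∧ κ₁ + κ₂ ≤ κ + 1 ∧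
              T (n, κ) ≤ T ((n + 1) / 2, κ₁) + T (n / 2, κ₂) + c * n) →
          ∀ n κ : ℕ, 1 ≤ n → 1 ≤ κ →
            T (n, κ) ≤ C * c * n * (1 + Real.logb 2 κ) := by
  refine ⟨8, by norm_num, ?_⟩
  intro c hc T hT0 hbase hrec n
  induction n using Nat.strong_induction_on with
  | _ n ih =>
    intro κ hn hκ
    have hlκ0 : 0 ≤ Real.logb 2 κ :=
      Real.logb_nonneg one_lt_two (by exact_mod_cast hκ)
    by_cases hsmall : n ≤ 1 ∨ κ ≤ 1
    · have h := hbase n κ hsmall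
      have hn0 : (0:ℝ) ≤ (n:ℝ) := by positivity
      nlinarith [hT0 n κ]
    · push_neg at hsmall
      obtain ⟨hn2, hκ2⟩ := hsmall
      obtain ⟨κ₁, κ₂, hκ₁, hκ₂, hsum, hT⟩ := hrec n κ hn2 hκ2
      set a := (n + 1) / 2 with ha
      set b := n / 2 with hb
      have hab : a + b = n := by omega
      have ha1 : 1 ≤ a := by omega
      have hb1 : 1 ≤ b := by omega
      have han : a < n := by omega
      have hbn : b < n := by omega
      have hba : b ≤ a := by omega
      have h3b : n ≤ 3 * b := by omega
      have iha := ih a han κ₁ ha1 hκ₁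
      have ihb := ih b hbn κ₂ hb1 hκ₂
      -- key inequality on logs
      have habr : (a:ℝ) + b = n := by exact_mod_cast hab
      have hbar : (b:ℝ) ≤ a := by exact_mod_cast hba
      have h3br : (n:ℝ) ≤ 3 * b := by exact_mod_cast h3b
      have hbr0 : (0:ℝ) ≤ b := by positivity
      have har0 : (0:ℝ) ≤ a := by positivity
      have hP1 : Real.logb 2 κ₁ ≤ Real.logb 2 κ := by
        apply Real.logb_le_logb_of_le one_lt_two (by exact_mod_cast hκ₁)
        exact_mod_cast (by omega : κ₁ ≤ κ)
      have hP2 : Real.logb 2 κ₂ ≤ Real.logb 2 κ := by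
        apply Real.logb_le_logb_of_le one_lt_two (by exact_mod_cast hκ₂)
        exact_mod_cast (by omega : κ₂ ≤ κ)
      have hmain : (a:ℝ) * (1 + Real.logb 2 κ₁) + (b:ℝ) * (1 + Real.logb 2 κ₂)
          ≤ (n:ℝ) * (1 + Real.logb 2 κ) - (2/5) * b := by
        rcases le_total κ₁ κ₂ with hle | hle
        · have hk := key_logb_s19 κ κ₁ hκ2 hκ₁ (by omega)
          nlinarith
        · have hk := key_logb_s19 κ κ₂ hκ2 hκ₂ (by omega)
          nlinarith
      calc T (n, κ) ≤ T (a, κ₁) + T (b, κ₂) + c * n := hT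
        _ ≤ 8 * c * a * (1 + Real.logb 2 κ₁) + 8 * c * b * (1 + Real.logb 2 κ₂) + c * n := by
            linarith
        _ ≤ 8 * c * ((n:ℝ) * (1 + Real.logb 2 κ) - (2/5) * b) + c * n := by nlinarith
        _ ≤ 8 * c * n * (1 + Real.logb 2 κ) := by nlinarith
end
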